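/- Four points v₁, v₂, v₃, v₄ ∈ ℝ³ are affinely independent (do not lie in a common plane) if and only if their Cayley–Menger determinant D is strictly positive. -/

import Mathlib

open Matrix
set_option maxHeartbeats 1000000 in
theorem det_fin_four' (A : Matrix (Fin 4) (Fin 4) ℝ) :
    det A =
      A 0 0 * (A 1 1 * A 2 2 * A 3 3 - A 1 1 * A 2 3 * A 3 2 - A 1 2 * A 2 1 * A 3 3
        + A 1 2 * A 2 3 * A 3 1 + A 1 3 * A 2 1 * A 3 2 - A 1 3 * A 2 2 * A 3 1)
    - A 0 1 * (A 1 0 * A 2 2 * A 3 3 - A 1 0 * A 2 3 * A 3 2 - A 1 2 * A 2 0 * A 3 3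
        + A 1 2 * A 2 3 * A 3 0 + A 1 3 * A 2 0 * A 3 2 - A 1 3 * A 2 2 * A 3 0)
    + A 0 2 * (A 1 0 * A 2 1 * A 3 3 - A 1 0 * A 2 3 * A 3 1 - A 1 1 * A 2 0 * A 3 3
        + A 1 1 * A 2 3 * A 3 0 + A 1 3 * A 2 0 * A 3 1 - A 1 3 * A 2 1 * A 3 0)
    - A 0 3 * (A 1 0 * A 2 1 * A 3 2 - A 1 0 * A 2 2 * A 3 1 - A 1 1 * A 2 0 * A 3 2
        + A 1 1 * A 2 2 * A 3 0 + A 1 2 * A 2 0 * A 3 1 - A 1 2 * A 2 1 * A 3 0) := by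
  rw [det_succ_row_zero]
  simp only [Fin.sum_univ_succ, Fin.sum_univ_zero, det_fin_three, submatrix_apply,
    Fin.succAbove, Fin.castSucc, Fin.castAdd, Fin.castLE, Fin.lt_def, Fin.val_succ]
  norm_num [show (Fin.succ 2 : Fin 4) = 3 from rfl, show ((⟨2, by norm_num⟩ : Fin 4)) = 2 from rfl]
  ring


set_option maxHeartbeats 2000000 in
theorem det_fin_five' (A : Matrix (Fin 5) (Fin 5) ℝ) :
    det A = A 0 0*A 1 1*A 2 2*A 3 3*A 4 4 - A 0 0*A 1 1*A 2 2*A 3 4*A 4 3 - A 0 0*A 1 1*A 2 3*A 3 2*A 4 4 + A 0 0*A 1 1*A 2 3*A 3 4*A 4 2 + A 0 0*A 1 1*A 2 4*A 3 2*A 4 3 - A 0 0*A 1 1*A 2 4*A 3 3*A 4 2 - A 0 0*A 1 2*A 2 1*A 3 3*A 4 4 + A 0 0*A 1 2*A 2 1*A 3 4*A 4 3 + A 0 0*A 1 2*A 2 3*A 3 1*A 4 4 - A 0 0*A 1 2*A 2 3*A 3 4*A 4 1 - A 0 0*A 1 2*A 2 4*A 3 1*A 4 3 + A 0 0*A 1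 2*A 2 4*A 3 3*A 4 1 + A 0 0*A 1 3*A 2 1*A 3 2*A 4 4 - A 0 0*A 1 3*A 2 1*A 3 4*A 4 2 - A 0 0*A 1 3*A 2 2*A 3 1*A 4 4 + A 0 0*A 1 3*A 2 2*A 3 4*A 4 1 + A 0 0*A 1 3*A 2 4*A 3 1*A 4 2 - A 0 0*A 1 3*A 2 4*A 3 2*A 4 1 - A 0 0*A 1 4*A 2 1*A 3 2*A 4 3 + A 0 0*A 1 4*A 2 1*A 3 3*A 4 2 + A 0 0*A 1 4*A 2 2*A 3 1*A 4 3 - A 0 0*A 1 4*A 2 2*A 3 3*A 4 1 - A 0 0*A 1 4*A 2 3*A 3 1*A 4 2 + A 0 0*A 1 4*A 2 3*A 3 2*A 4 1 - A 0 1*A 1 0*A 2 2*A 3 3*A 4 4 + A 0 1*A 1 0*A 2 2*A 3 4*A 4 3 + A 0 1*A 1 0*A 2 3*A 3 2*A 4 4 - A 0 1*A 1 0*A 2 3*A 3 4*A 4 2 - A 0 1*A 1 0*A 2 4*A 3 2*A 4 3 + A 0 1*A 1 0*A 2 4*A 3 3*A 4 2 + A 0 1*A 1 2*A 2 0*A 3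 3*A 4 4 - A 0 1*A 1 2*A 2 0*A 3 4*A 4 3 - A 0 1*A 1 2*A 2 3*A 3 0*A 4 4 + A 0 1*A 1 2*A 2 3*A 3 4*A 4 0 + A 0 1*A 1 2*A 2 4*A 3 0*A 4 3 - A 0 1*A 1 2*A 2 4*A 3 3*A 4 0 - A 0 1*A 1 3*A 2 0*A 3 2*A 4 4 + A 0 1*A 1 3*A 2 0*A 3 4*A 4 2 + A 0 1*A 1 3*A 2 2*A 3 0*A 4 4 - A 0 1*A 1 3*A 2 2*A 3 4*A 4 0 - A 0 1*A 1 3*A 2 4*A 3 0*A 4 2 + A 0 1*A 1 3*A 2 4*A 3 2*A 4 0 + A 0 1*A 1 4*A 2 0*A 3 2*A 4 3 - A 0 1*A 1 4*A 2 0*A 3 3*A 4 2 - A 0 1*A 1 4*A 2 2*A 3 0*A 4 3 + A 0 1*A 1 4*A 2 2*A 3 3*A 4 0 + A 0 1*A 1 4*A 2 3*A 3 0*A 4 2 - A 0 1*A 1 4*A 2 3*A 3 2*A 4 0 + A 0 2*A 1 0*A 2 1*A 3 3*A 4 4 - A 0 2*A 1 0*A 2 1*A 3 4*A 4 3 - A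 0 2*A 1 0*A 2 3*A 3 1*A 4 4 + A 0 2*A 1 0*A 2 3*A 3 4*A 4 1 + A 0 2*A 1 0*A 2 4*A 3 1*A 4 3 - A 0 2*A 1 0*A 2 4*A 3 3*A 4 1 - A 0 2*A 1 1*A 2 0*A 3 3*A 4 4 + A 0 2*A 1 1*A 2 0*A 3 4*A 4 3 + A 0 2*A 1 1*A 2 3*A 3 0*A 4 4 - A 0 2*A 1 1*A 2 3*A 3 4*A 4 0 - A 0 2*A 1 1*A 2 4*A 3 0*A 4 3 + A 0 2*A 1 1*A 2 4*A 3 3*A 4 0 + A 0 2*A 1 3*A 2 0*A 3 1*A 4 4 - A 0 2*A 1 3*A 2 0*A 3 4*A 4 1 - A 0 2*A 1 3*A 2 1*A 3 0*A 4 4 + A 0 2*A 1 3*A 2 1*A 3 4*A 4 0 + A 0 2*A 1 3*A 2 4*A 3 0*A 4 1 - A 0 2*A 1 3*A 2 4*A 3 1*A 4 0 - A 0 2*A 1 4*A 2 0*A 3 1*A 4 3 + A 0 2*A 1 4*A 2 0*A 3 3*A 4 1 + A 0 2*A 1 4*A 2 1*A 3 0*A 4 3 - A 0 2*A 1 4*A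 2 1*A 3 3*A 4 0 - A 0 2*A 1 4*A 2 3*A 3 0*A 4 1 + A 0 2*A 1 4*A 2 3*A 3 1*A 4 0 - A 0 3*A 1 0*A 2 1*A 3 2*A 4 4 + A 0 3*A 1 0*A 2 1*A 3 4*A 4 2 + A 0 3*A 1 0*A 2 2*A 3 1*A 4 4 - A 0 3*A 1 0*A 2 2*A 3 4*A 4 1 - A 0 3*A 1 0*A 2 4*A 3 1*A 4 2 + A 0 3*A 1 0*A 2 4*A 3 2*A 4 1 + A 0 3*A 1 1*A 2 0*A 3 2*A 4 4 - A 0 3*A 1 1*A 2 0*A 3 4*A 4 2 - A 0 3*A 1 1*A 2 2*A 3 0*A 4 4 + A 0 3*A 1 1*A 2 2*A 3 4*A 4 0 + A 0 3*A 1 1*A 2 4*A 3 0*A 4 2 - A 0 3*A 1 1*A 2 4*A 3 2*A 4 0 - A 0 3*A 1 2*A 2 0*A 3 1*A 4 4 + A 0 3*A 1 2*A 2 0*A 3 4*A 4 1 + A 0 3*A 1 2*A 2 1*A 3 0*A 4 4 - A 0 3*A 1 2*A 2 1*A 3 4*A 4 0 - A 0 3*A 1 2*A 2 4*A 3 0*A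 4 1 + A 0 3*A 1 2*A 2 4*A 3 1*A 4 0 + A 0 3*A 1 4*A 2 0*A 3 1*A 4 2 - A 0 3*A 1 4*A 2 0*A 3 2*A 4 1 - A 0 3*A 1 4*A 2 1*A 3 0*A 4 2 + A 0 3*A 1 4*A 2 1*A 3 2*A 4 0 + A 0 3*A 1 4*A 2 2*A 3 0*A 4 1 - A 0 3*A 1 4*A 2 2*A 3 1*A 4 0 + A 0 4*A 1 0*A 2 1*A 3 2*A 4 3 - A 0 4*A 1 0*A 2 1*A 3 3*A 4 2 - A 0 4*A 1 0*A 2 2*A 3 1*A 4 3 + A 0 4*A 1 0*A 2 2*A 3 3*A 4 1 + A 0 4*A 1 0*A 2 3*A 3 1*A 4 2 - A 0 4*A 1 0*A 2 3*A 3 2*A 4 1 - A 0 4*A 1 1*A 2 0*A 3 2*A 4 3 + A 0 4*A 1 1*A 2 0*A 3 3*A 4 2 + A 0 4*A 1 1*A 2 2*A 3 0*A 4 3 - A 0 4*A 1 1*A 2 2*A 3 3*A 4 0 - A 0 4*A 1 1*A 2 3*A 3 0*A 4 2 + A 0 4*A 1 1*A 2 3*A 3 2*A 4 0 + A 0 4*A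 1 2*A 2 0*A 3 1*A 4 3 - A 0 4*A 1 2*A 2 0*A 3 3*A 4 1 - A 0 4*A 1 2*A 2 1*A 3 0*A 4 3 + A 0 4*A 1 2*A 2 1*A 3 3*A 4 0 + A 0 4*A 1 2*A 2 3*A 3 0*A 4 1 - A 0 4*A 1 2*A 2 3*A 3 1*A 4 0 - A 0 4*A 1 3*A 2 0*A 3 1*A 4 2 + A 0 4*A 1 3*A 2 0*A 3 2*A 4 1 + A 0 4*A 1 3*A 2 1*A 3 0*A 4 2 - A 0 4*A 1 3*A 2 1*A 3 2*A 4 0 - A 0 4*A 1 3*A 2 2*A 3 0*A 4 1 + A 0 4*A 1 3*A 2 2*A 3 1*A 4 0 := by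
  rw [det_succ_row_zero]
  simp only [Fin.sum_univ_succ, Fin.sum_univ_zero, det_fin_four', submatrix_apply,
    Fin.succAbove, Fin.castSucc, Fin.castAdd, Fin.castLE, Fin.lt_def, Fin.val_succ]
  norm_num [show ((0:Fin 4):ℕ) = 0 from rfl, show ((1:Fin 4):ℕ) = 1 from rfl,
    show ((2:Fin 4):ℕ) = 2 from rfl, show ((3:Fin 4):ℕ) = 3 from rfl,
    show (Fin.succ 0 : Fin 5) = 1 from rfl, show (Fin.succ 1 : Fin 5) = 2 from rfl,
    show (Fin.succ 2 : Fin 5) = 3 from rfl, show (Fin.succ 3 : Fin 5) = 4 from rfl,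
    show ((⟨0, by norm_num⟩ : Fin 5)) = 0 from rfl, show ((⟨1, by norm_num⟩ : Fin 5)) = 1 from rfl,
    show ((⟨2, by norm_num⟩ : Fin 5)) = 2 from rfl, show ((⟨3, by norm_num⟩ : Fin 5)) = 3 from rfl, show (Fin.succ (0:Fin 2) : Fin 3) = 1 from rfl, show (Fin.succ (1:Fin 2) : Fin 3) = 2 from rfl, show ((⟨0, by norm_num⟩ : Fin 3)) = 0 from rfl, show ((⟨1, by norm_num⟩ : Fin 3)) = 1 from rfl, show ((⟨2, by norm_num⟩ : Fin 3)) = 2 from rfl, show ((0:Fin 2):ℕ) = 0 from rfl, show ((1:Fin 2):ℕ) = 1 from rfl, show (Fin.succ (0:Fin 3) : Fin 4) = 1 from rfl, show (Fin.succ (1:Fin 3) : Fin 4) = 2 from rfl, show (Fin.succ (2:Fin 3) : Fin 4) = 3 from rfl, show ((⟨0, by norm_num⟩ : Fin 4)) = 0 from rfl, show ((⟨1, by norm_num⟩ : Fin 4)) = 1 from rfl, show ((⟨2, by norm_num⟩ : Fin 4)) = 2 from rfl, show ((⟨3, by norm_num⟩ : Fin 4)) = 3 from rfl, show ((0:Fin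 3):ℕ) = 0 from rfl, show ((1:Fin 3):ℕ) = 1 from rfl, show ((2:Fin 3):ℕ) = 2 from rfl, show (Fin.succ (0:Fin 4) : Fin 5) = 1 from rfl, show (Fin.succ (1:Fin 4) : Fin 5) = 2 from rfl, show (Fin.succ (2:Fin 4) : Fin 5) = 3 from rfl, show (Fin.succ (3:Fin 4) : Fin 5) = 4 from rfl, show ((⟨0, by norm_num⟩ : Fin 5)) = 0 from rfl, show ((⟨1, by norm_num⟩ : Fin 5)) = 1 from rfl, show ((⟨2, by norm_num⟩ : Fin 5)) = 2 from rfl, show ((⟨3, by norm_num⟩ : Fin 5)) = 3 from rfl, show ((⟨4, by norm_num⟩ : Fin 5)) = 4 from rfl, show ((0:Fin 4):ℕ) = 0 from rfl, show ((1:Fin 4):ℕ) = 1 from rfl, show ((2:Fin 4):ℕ) = 2 from rfl, show ((3:Fin 4):ℕ) = 3 from rfl]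
  ring

set_option maxHeartbeats 2000000 in
theorem cm_gram (p q r s t u : ℝ) :
    Matrix.det
      !![0, p, q, r, 1;
         p, 0, p-2*s+q, p-2*t+r, 1;
         q, p-2*s+q, 0, q-2*u+r, 1;
         r, p-2*t+r, q-2*u+r, 0, 1;
         1, 1, 1, 1, 0] =
    8 * Matrix.det !![p, s, t; s, q, u; t, u, r] := by
  rw [det_fin_five', det_fin_three]
  norm_num [Matrix.cons_val_zero, Matrix.cons_val_one, Matrix.head_cons, Matrix.cons_val_two,
    Matrix.cons_val_three, Matrix.cons_val_four, Matrix.head_fin_const, Matrix.tail_cons,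
    Matrix.cons_val', Matrix.empty_val', Matrix.cons_val_fin_one]
  ring


open Matrix in
theorem gram_eq (u : Fin 3 → EuclideanSpace ℝ (Fin 3)) :
    (!![(inner ℝ (u 0) (u 0) : ℝ), (inner ℝ (u 0) (u 1) : ℝ), (inner ℝ (u 0) (u 2) : ℝ);
        (inner ℝ (u 0) (u 1) : ℝ), (inner ℝ (u 1) (u 1) : ℝ), (inner ℝ (u 1) (u 2) : ℝ);
        (inner ℝ (u 0) (u 2) : ℝ), (inner ℝ (u 1) (u 2) : ℝ), (inner ℝ (u 2) (u 2) : ℝ)] :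
        Matrix (Fin 3) (Fin 3) ℝ) =
      (Matrix.of (fun i j => u i j)) * (Matrix.of (fun i j => u i j))ᵀ := by
  ext i j
  fin_cases i <;> fin_cases j <;>
    simp [Matrix.mul_apply, PiLp.inner_apply, RCLike.inner_apply, Fin.sum_univ_succ, -inner_self_eq_norm_sq_to_K] <;> ring

/-- Four points in ℝ³ are affinely independent iff their Cayley–Menger determinant is
strictly positive. -/
theorem affineIndependent_iff_cayleyMenger_pos (v₁ v₂ v₃ v₄ : EuclideanSpace ℝ (Fin 3)) :
    AffineIndependent ℝ ![v₁, v₂, v₃, v₄] ↔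
      0 < Matrix.det
        !![0, dist v₁ v₂ ^ 2, dist v₁ v₃ ^ 2, dist v₁ v₄ ^ 2, 1;
           dist v₁ v₂ ^ 2, 0, dist v₂ v₃ ^ 2, dist v₂ v₄ ^ 2, 1;
           dist v₁ v₃ ^ 2, dist v₂ v₃ ^ 2, 0, dist v₃ v₄ ^ 2, 1;
           dist v₁ v₄ ^ 2, dist v₂ v₄ ^ 2, dist v₃ v₄ ^ 2, 0, 1;
           1, 1, 1, 1, 0] := by
  set u : Fin 3 → EuclideanSpace ℝ (Fin 3) := ![v₂ - v₁, v₃ - v₁, v₄ - v₁] with hu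
  -- Step 1: affine independence ↔ linear independence of the difference vectors
  have step1 : AffineIndependent ℝ ![v₁, v₂, v₃, v₄] ↔ LinearIndependent ℝ u := by
    rw [affineIndependent_iff_linearIndependent_vsub ℝ _ 0]
    let e : Fin 3 ≃ {x : Fin 4 // x ≠ 0} :=
      { toFun := fun i => ⟨i.succ, Fin.succ_ne_zero i⟩
        invFun := fun j => (j : Fin 4).pred j.2
        left_inv := fun i => by simp
        right_inv := fun j => by ext; simp }
    rw [← linearIndependent_equiv e]
    congr! 1
    funext i
    fin_cases i <;> simp [e, hu]
  -- Step 2: rewrite the distances in terms of inner products of the difference vectors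
  have h2 : v₂ = u 0 + v₁ := by simp [hu]
  have h3 : v₃ = u 1 + v₁ := by simp [hu]
  have h4 : v₄ = u 2 + v₁ := by simp [hu]
  have key : ∀ a b : EuclideanSpace ℝ (Fin 3),
      dist (a + v₁) (b + v₁) ^ 2 = (inner ℝ a a : ℝ) - 2 * (inner ℝ a b : ℝ) + (inner ℝ b b : ℝ) := by
    intro a b
    rw [dist_eq_norm, add_sub_add_right_eq_sub, norm_sub_sq_real,
      real_inner_self_eq_norm_sq, real_inner_self_eq_norm_sq]
  have d12 : dist v₁ v₂ ^ 2 = (inner ℝ (u 0) (u 0) : ℝ) := by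
    rw [dist_comm, h2, dist_eq_norm, add_sub_cancel_right, real_inner_self_eq_norm_sq]
  have d13 : dist v₁ v₃ ^ 2 = (inner ℝ (u 1) (u 1) : ℝ) := by
    rw [dist_comm, h3, dist_eq_norm, add_sub_cancel_right, real_inner_self_eq_norm_sq]
  have d14 : dist v₁ v₄ ^ 2 = (inner ℝ (u 2) (u 2) : ℝ) := by
    rw [dist_comm, h4, dist_eq_norm, add_sub_cancel_right, real_inner_self_eq_norm_sq]
  have d23 : dist v₂ v₃ ^ 2
      = (inner ℝ (u 0) (u 0) : ℝ) - 2 * (inner ℝ (u 0) (u 1) : ℝ) + (inner ℝ (u 1) (u 1) : ℝ) := by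
    rw [h2, h3]; exact key _ _
  have d24 : dist v₂ v₄ ^ 2
      = (inner ℝ (u 0) (u 0) : ℝ) - 2 * (inner ℝ (u 0) (u 2) : ℝ) + (inner ℝ (u 2) (u 2) : ℝ) := by
    rw [h2, h4]; exact key _ _
  have d34 : dist v₃ v₄ ^ 2
      = (inner ℝ (u 1) (u 1) : ℝ) - 2 * (inner ℝ (u 1) (u 2) : ℝ) + (inner ℝ (u 2) (u 2) : ℝ) := by
    rw [h3, h4]; exact key _ _
  rw [step1, d12, d13, d14, d23, d24, d34, cm_gram, gram_eq, Matrix.det_mul,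
    Matrix.det_transpose, ← sq]
  set M : Matrix (Fin 3) (Fin 3) ℝ := Matrix.of (fun i j => u i j) with hM
  have hLI : LinearIndependent ℝ u ↔ IsUnit M := by
    rw [← Matrix.linearIndependent_rows_iff_isUnit]; exact ((WithLp.linearEquiv 2 ℝ (Fin 3 → ℝ)).toLinearMap.linearIndependent_iff (LinearEquiv.ker _)).symm
  rw [hLI, Matrix.isUnit_iff_isUnit_det, isUnit_iff_ne_zero]
  constructor
  · intro h
    have := sq_pos_of_ne_zero h
    linarith
  · intro h
    intro hd
    rw [hd] at h
    norm_num at h
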